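/- For every n ≥ 1, the recurrence coefficient a_n = ⟨f_{n+1}, s_n⟩_S/‖s_n‖_S² satisfies |a_n| ≤ min(C, χ^{−1}·C³). -/

import Mathlib

open Filter RealInnerProductSpace

variable {H : Type*} [NormedAddCommGroup H] [InnerProductSpace ℝ H]

/-- `Wlt P n` is the span of `P 0, …, P (n-1)`; thus `Wlt P 0 = ⊥ = W_{-1}` and
`Wlt P (n+1)` is the space `W_n = span{P_0, …, P_n}`. -/
def Wlt (P : ℕ → H) (n : ℕ) : Submodule ℝ H := Submodule.span ℝ (P '' Set.Iio n)

/-- `Wtot P` is the space `W = ⋃ₙ Wₙ` of all polynomials. -/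
def Wtot (P : ℕ → H) : Submodule ℝ H := Submodule.span ℝ (Set.range P)

/-- The Sobolev inner product `⟨f, g⟩_S = ⟨f, g⟩₂ + χ⟨Δf, Δg⟩₂`. -/
noncomputable def innerS (Δ : H →ₗ[ℝ] H) (χ : ℝ) (f g : H) : ℝ :=
  ⟪ f, g ⟫ + χ * ⟪ Δ f, Δ g ⟫

/-- The Sobolev norm `‖f‖_S = √(‖f‖₂² + χ‖Δf‖₂²)`. -/
noncomputable def normS (Δ : H →ₗ[ℝ] H) (χ : ℝ) (f : H) : ℝ :=
  Real.sqrt (‖f‖ ^ 2 + χ * ‖Δ f‖ ^ 2)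

lemma Wlt_le_Wtot (P : ℕ → H) (n : ℕ) : Wlt P n ≤ Wtot P :=
  Submodule.span_mono (Set.image_subset_range _ _)

lemma Wlt_mono (P : ℕ → H) {m n : ℕ} (h : m ≤ n) : Wlt P m ≤ Wlt P n :=
  Submodule.span_mono (Set.image_mono (Set.Iio_subset_Iio h))

lemma P_mem_Wlt (P : ℕ → H) {k n : ℕ} (h : k < n) : P k ∈ Wlt P n :=
  Submodule.subset_span ⟨k, h, rfl⟩

lemma Δ_maps (P : ℕ → H) (Δ : H →ₗ[ℝ] H)
    (hΔ0 : Δ (P 0) = 0) (hΔsucc : ∀ n, Δ (P (n + 1)) = P n)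
    (n : ℕ) : ∀ u ∈ Wlt P (n + 1), Δ u ∈ Wlt P n := by
  intro u hu
  induction hu using Submodule.span_induction with
  | mem x hx =>
    obtain ⟨k, hk, rfl⟩ := hx
    cases k with
    | zero => rw [hΔ0]; exact Submodule.zero_mem _
    | succ m =>
      rw [hΔsucc]
      exact P_mem_Wlt P (by simpa using Nat.lt_of_succ_lt_succ hk)
  | zero => simp
  | add x y hx hy ihx ihy => rw [map_add]; exact Submodule.add_mem _ ihx ihy
  | smul a x hx ihx => rw [map_smul]; exact Submodule.smul_mem _ _ ihx

lemma ker_lemma (P : ℕ → H) (hP : LinearIndependent ℝ P) (Δ : H →ₗ[ℝ] H)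
    (hΔ0 : Δ (P 0) = 0) (hΔsucc : ∀ n, Δ (P (n + 1)) = P n) :
    ∀ m : ℕ, ∀ u ∈ Wlt P (m + 1), Δ u = 0 → u ∈ Wlt P 1 := by
  intro m
  induction m with
  | zero => intro u hu _; exact hu
  | succ m ih =>
    intro u hu hΔu
    have hset : Set.Iio (m + 2) = insert (m + 1) (Set.Iio (m + 1)) := by
      ext x; simp; omega
    rw [Wlt, hset, Set.image_insert_eq, Submodule.mem_span_insert] at hu
    obtain ⟨c, z, hz, rfl⟩ := hu
    have hzW : z ∈ Wlt P (m + 1) := hz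
    have hΔz : Δ z ∈ Wlt P m := Δ_maps P Δ hΔ0 hΔsucc m z hzW
    have hc : c • P m = -Δ z := by
      have : c • P m + Δ z = 0 := by
        rw [map_add, map_smul, hΔsucc] at hΔu; exact hΔu
      linear_combination (norm := module) this
    have hcPm : c • P m ∈ Wlt P m := by rw [hc]; exact Submodule.neg_mem _ hΔz
    have hc0 : c = 0 := by
      by_contra hc0
      have : P m ∈ Wlt P m := by
        have := Submodule.smul_mem (Wlt P m) c⁻¹ hcPm
        rwa [smul_smul, inv_mul_cancel₀ hc0, one_smul] at this
      exact hP.notMem_span_image (by simp) this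
    rw [hc0, zero_smul, zero_add]
    refine ih z hzW ?_
    rw [hc0, zero_smul, zero_add] at hΔu
    exact hΔu


/-- For `n ≥ 1`, `|a_n| = |⟨f_{n+1}, s_n⟩_S/‖s_n‖_S²| ≤ min(C, χ⁻¹C³)`. -/
theorem statement8
    (P : ℕ → H) (hP : LinearIndependent ℝ P)
    (Δ G : H →ₗ[ℝ] H)
    (hΔ0 : Δ (P 0) = 0) (hΔsucc : ∀ n, Δ (P (n + 1)) = P n)
    (hGsym : ∀ u ∈ Wtot P, ∀ v ∈ Wtot P, ⟪ G u, v ⟫ = ⟪ u, G v ⟫)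
    (hGinv : ∀ u ∈ Wtot P, Δ (G u) = u)
    (hGmap : ∀ n, ∀ u ∈ Wlt P (n + 1), G u ∈ Wlt P (n + 2))
    (C : ℝ) (hC : 0 < C)
    (hGbound : ∀ u ∈ Wtot P, ‖G u‖ ≤ C * ‖u‖)
    (χ : ℝ) (hχ : 0 < χ)
    (p : ℕ → H)
    (hpmonic : ∀ n, p n - P n ∈ Wlt P n)
    (hportho : ∀ n, ∀ w ∈ Wlt P n, ⟪ p n, w ⟫ = 0)
    (s : ℕ → H)
    (hsmonic : ∀ n, s n - P n ∈ Wlt P n)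
    (hsortho : ∀ n, ∀ w ∈ Wlt P n, innerS Δ χ (s n) w = 0)
    : ∀ n, 1 ≤ n →
      |innerS Δ χ (G (p n)) (s n) / (‖s n‖ ^ 2 + χ * ‖Δ (s n)‖ ^ 2)| ≤
        min C (χ⁻¹ * C ^ 3) := by
  intro n hn
  -- basic memberships
  have hpW1 : p n ∈ Wlt P (n + 1) := by
    have := Submodule.add_mem _ (Wlt_mono P (Nat.le_succ n) (hpmonic n))
      (P_mem_Wlt P (Nat.lt_succ_self n))
    simpa using this
  have hsW1 : s n ∈ Wlt P (n + 1) := by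
    have := Submodule.add_mem _ (Wlt_mono P (Nat.le_succ n) (hsmonic n))
      (P_mem_Wlt P (Nat.lt_succ_self n))
    simpa using this
  have hpW : p n ∈ Wtot P := Wlt_le_Wtot P _ hpW1
  have hsW : s n ∈ Wtot P := Wlt_le_Wtot P _ hsW1
  have hΔs : Δ (s n) ∈ Wlt P n := Δ_maps P Δ hΔ0 hΔsucc n _ hsW1
  have hΔsW : Δ (s n) ∈ Wtot P := Wlt_le_Wtot P _ hΔs
  set A : ℝ := ⟪ G (p n), s n ⟫ with hA
  set D : ℝ := ‖s n‖ ^ 2 + χ * ‖Δ (s n)‖ ^ 2 with hD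
  have hD0 : 0 ≤ D := by positivity
  -- numerator reduction
  have hnum : innerS Δ χ (G (p n)) (s n) = A := by
    rw [innerS, hGinv _ hpW, hportho n _ hΔs, mul_zero, add_zero]
  -- step 2: |A| ≤ C * (‖p n‖ * ‖s n‖)
  have h2 : |A| ≤ C * (‖p n‖ * ‖s n‖) := by
    calc |A| ≤ ‖G (p n)‖ * ‖s n‖ := abs_real_inner_le_norm _ _
      _ ≤ (C * ‖p n‖) * ‖s n‖ :=
        mul_le_mul_of_nonneg_right (hGbound _ hpW) (norm_nonneg _)
      _ = C * (‖p n‖ * ‖s n‖) := by ring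
  -- step 3: ‖p n‖ ≤ ‖s n‖
  have hdiff : s n - p n ∈ Wlt P n := by
    have := Submodule.sub_mem _ (hsmonic n) (hpmonic n)
    simpa using this
  have horth : ⟪ p n, s n - p n ⟫ = 0 := hportho n _ hdiff
  have h3 : ‖p n‖ ≤ ‖s n‖ := by
    have hexp : ‖s n‖ ^ 2 = ‖p n‖ ^ 2 + ‖s n - p n‖ ^ 2 := by
      have : s n = p n + (s n - p n) := by abel
      rw [this, norm_add_sq_real, horth, add_sub_cancel_left]; ring
    nlinarith [norm_nonneg (p n), norm_nonneg (s n), sq_nonneg (‖s n - p n‖)]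
  -- step 5: s n - G (Δ (s n)) ∈ span P 0
  have hGΔs : G (Δ (s n)) ∈ Wlt P (n + 2) :=
    hGmap n _ (Wlt_mono P (Nat.le_succ n) hΔs)
  have hvmem : s n - G (Δ (s n)) ∈ Wlt P (n + 2) :=
    Submodule.sub_mem _ (Wlt_mono P (by omega) hsW1) hGΔs
  have hΔv : Δ (s n - G (Δ (s n))) = 0 := by
    rw [map_sub, hGinv _ hΔsW, sub_self]
  have hv1 : s n - G (Δ (s n)) ∈ Wlt P 1 := ker_lemma P hP Δ hΔ0 hΔsucc (n + 1) _ hvmem hΔv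
  have hvn : s n - G (Δ (s n)) ∈ Wlt P n := Wlt_mono P hn hv1
  have hsv : ⟪ s n, s n - G (Δ (s n)) ⟫ = 0 := by
    have := hsortho n _ hvn
    rw [innerS, hΔv, inner_zero_right, mul_zero, add_zero] at this
    exact this
  -- step 6: ‖s n‖ ≤ C * ‖Δ (s n)‖
  have h6 : ‖s n‖ ≤ C * ‖Δ (s n)‖ := by
    have hkey : ‖s n‖ ^ 2 = ⟪ s n, G (Δ (s n)) ⟫ := by
      have : ⟪ s n, s n ⟫ = ⟪ s n, G (Δ (s n)) ⟫ + ⟪ s n, s n - G (Δ (s n)) ⟫ := by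
        rw [← inner_add_right]; congr 1; abel
      rw [hsv, add_zero] at this
      rw [← real_inner_self_eq_norm_sq, this]
    have hb : ‖s n‖ ^ 2 ≤ ‖s n‖ * (C * ‖Δ (s n)‖) := by
      rw [hkey]
      calc ⟪ s n, G (Δ (s n)) ⟫ ≤ |⟪ s n, G (Δ (s n)) ⟫| := le_abs_self _
        _ ≤ ‖s n‖ * ‖G (Δ (s n))‖ := abs_real_inner_le_norm _ _
        _ ≤ ‖s n‖ * (C * ‖Δ (s n)‖) :=
          mul_le_mul_of_nonneg_left (hGbound _ hΔsW) (norm_nonneg _)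
    rcases eq_or_lt_of_le (norm_nonneg (s n)) with h0 | h0
    · rw [← h0]; positivity
    · have := hb
      rw [sq] at this
      exact le_of_mul_le_mul_left (by linarith [this]) h0
  -- combine
  have habs : |A| ≤ C * ‖s n‖ ^ 2 := by
    calc |A| ≤ C * (‖p n‖ * ‖s n‖) := h2
      _ ≤ C * (‖s n‖ * ‖s n‖) := by
        apply mul_le_mul_of_nonneg_left _ hC.le
        exact mul_le_mul_of_nonneg_right h3 (norm_nonneg _)
      _ = C * ‖s n‖ ^ 2 := by ring
  rw [hnum]
  rcases eq_or_lt_of_le hD0 with hDz | hDpos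
  · rw [← hDz, div_zero, abs_zero]
    apply le_min hC.le
    positivity
  · apply le_min <;> rw [abs_div, abs_of_pos hDpos, div_le_iff₀ hDpos]
    · calc |A| ≤ C * ‖s n‖ ^ 2 := habs
        _ ≤ C * D := by
          apply mul_le_mul_of_nonneg_left _ hC.le
          rw [hD]; nlinarith [sq_nonneg ‖Δ (s n)‖]
    · calc |A| ≤ C * ‖s n‖ ^ 2 := habs
        _ ≤ C * (C * ‖Δ (s n)‖) ^ 2 := by
          apply mul_le_mul_of_nonneg_left _ hC.le
          exact pow_le_pow_left₀ (norm_nonneg _) h6 2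
        _ = C ^ 3 * ‖Δ (s n)‖ ^ 2 := by ring
        _ ≤ χ⁻¹ * C ^ 3 * D := by
          rw [hD]
          rw [mul_comm χ⁻¹ (C ^ 3), mul_assoc]
          apply mul_le_mul_of_nonneg_left _ (by positivity)
          rw [le_inv_mul_iff₀ hχ]
          nlinarith [sq_nonneg ‖s n‖]
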